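/- arXiv:2412.17583 — 3 statements merged into one kernel-verified Lean document; each statement's English description precedes it below -/
import Mathlib

section
/- Let f : ℕ → ℂ be 1-bounded. Then there is an absolute constant C such that for every N ≥ 2 and ε ∈ (0, 1/2), |E^log_{n ∈ [N]} f(n) − E^log_{M ∈ (N^ε, N)} E_{n ∈ [M]} f(n)| ≤ C·(1/log N + ε), where E^log_{n ∈ A} f(n) = (∑_{n∈A} f(n)/n)/(∑_{n∈A} 1/n) denotes the logarithmic average and E_{n∈[M]} f(n) = (1/M)∑_{n=1}^M f(n) the Cesàro average. -/
open scoped Classical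

/-- Logarithmic average of `f` over a finite set of positive integers. -/
noncomputable def logAvgOn (S : Finset ℕ) (f : ℕ → ℂ) : ℂ :=
  (∑ n ∈ S, f n / (n : ℂ)) / (∑ n ∈ S, (1 / (n : ℂ)))

/-- Logarithmic average of `f` over `[N] = {1,…,N}`. -/
noncomputable def logAvg (N : ℕ) (f : ℕ → ℂ) : ℂ := logAvgOn (Finset.Icc 1 N) f

/-- Cesàro average of `f` over `[M] = {1,…,M}`. -/
noncomputable def cesAvg (M : ℕ) (f : ℕ → ℂ) : ℂ := (∑ n ∈ Finset.Icc 1 M, f n) / (M : ℂ)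

private lemma sum_inv_sq_upper' : ∀ (b n : ℕ), 1 ≤ n → n ≤ b →
    ∑ M ∈ Finset.Icc n b, (1:ℝ)/(M:ℝ)^2 ≤ 1/(n:ℝ)^2 + 1/(n:ℝ) - 1/(b:ℝ) := by
  intro b
  induction b with
  | zero => intro n h1 h2; omega
  | succ b ih =>
    intro n h1 h2
    rcases Nat.lt_or_ge b n with h | h
    · have hn : n = b + 1 := by omega
      subst hn
      rw [Finset.Icc_self, Finset.sum_singleton]
      push_cast
      ring_nf
      exact le_refl _
    · rw [Finset.sum_Icc_succ_top (by omega : n ≤ b + 1)]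
      have hb1 : (0:ℝ) < (b:ℝ) := by
        have : 1 ≤ b := le_trans h1 h
        exact_mod_cast this
      have hb2 : (0:ℝ) < (b:ℝ)+1 := by positivity
      have key : (1:ℝ)/((b:ℝ)+1)^2 ≤ 1/(b:ℝ) - 1/((b:ℝ)+1) := by
        rw [div_sub_div _ _ (ne_of_gt hb1) (ne_of_gt hb2),
          div_le_div_iff₀ (by positivity) (by positivity)]
        nlinarith
      have := ih n h1 h
      push_cast
      linarith

private lemma sum_inv_sq_upper (n b : ℕ) (h1 : 1 ≤ n) :
    ∑ M ∈ Finset.Icc n b, (1:ℝ)/(M:ℝ)^2 ≤ 1/(n:ℝ)^2 + 1/(n:ℝ) := by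
  rcases Nat.lt_or_ge b n with h | h
  · rw [Finset.Icc_eq_empty (by omega), Finset.sum_empty]
    positivity
  · have := sum_inv_sq_upper' b n h1 h
    have hb : (0:ℝ) ≤ 1/(b:ℝ) := by positivity
    linarith

private lemma sum_telescope_inv : ∀ (b n : ℕ), 1 ≤ n → n ≤ b + 1 →
    ∑ M ∈ Finset.Icc n b, ((1:ℝ)/(M:ℝ) - 1/((M:ℝ)+1)) = 1/(n:ℝ) - 1/((b:ℝ)+1) := by
  intro b
  induction b with
  | zero =>
    intro n h1 h2
    interval_cases n
    simp
  | succ b ih =>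
    intro n h1 h2
    rcases Nat.lt_or_ge (b+1) n with h | h
    · have hn : n = b + 2 := by omega
      subst hn
      have : Finset.Icc (b+2) (b+1) = ∅ := by rw [Finset.Icc_eq_empty]; omega
      rw [this, Finset.sum_empty]
      push_cast
      ring
    · rw [Finset.sum_Icc_succ_top (by omega : n ≤ b + 1), ih n h1 h]
      push_cast
      ring

private lemma sum_inv_sq_lower (b n : ℕ) (h1 : 1 ≤ n) (h2 : n ≤ b + 1) :
    1/(n:ℝ) - 1/((b:ℝ)+1) ≤ ∑ M ∈ Finset.Icc n b, (1:ℝ)/(M:ℝ)^2 := by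
  rw [← sum_telescope_inv b n h1 h2]
  apply Finset.sum_le_sum
  intro M hM
  have hM1 : 1 ≤ M := le_trans h1 (Finset.mem_Icc.mp hM).1
  have h0 : (0:ℝ) < M := by exact_mod_cast hM1
  have h0' : (0:ℝ) < (M:ℝ)+1 := by linarith
  rw [div_sub_div _ _ (ne_of_gt h0) (ne_of_gt h0'),
    div_le_div_iff₀ (by positivity) (by positivity)]
  nlinarith

private lemma swap_sum (f : ℕ → ℂ) (N K : ℕ) :
    ∑ M ∈ Finset.Ioo K N, cesAvg M f / (M:ℂ)
      = ∑ n ∈ Finset.Icc 1 N,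
          f n * ((∑ M ∈ Finset.Ioo K N, if n ≤ M then (1:ℝ)/(M:ℝ)^2 else 0 : ℝ) : ℂ) := by
  have step1 : ∑ M ∈ Finset.Ioo K N, cesAvg M f / (M:ℂ)
      = ∑ M ∈ Finset.Ioo K N, ∑ n ∈ Finset.Icc 1 N,
          (if n ≤ M then f n * (((1:ℝ)/(M:ℝ)^2 : ℝ) : ℂ) else 0) := by
    apply Finset.sum_congr rfl
    intro M hM
    obtain ⟨hK, hMN⟩ := Finset.mem_Ioo.mp hM
    have h1 : cesAvg M f / (M:ℂ) = ∑ n ∈ Finset.Icc 1 M, f n * (((1:ℝ)/(M:ℝ)^2 : ℝ) : ℂ) := by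
      rw [cesAvg, div_div, Finset.sum_div]
      apply Finset.sum_congr rfl
      intro n _
      push_cast
      rw [one_div, sq, div_eq_mul_inv]
    rw [h1, ← Finset.sum_filter]
    congr 1
    ext n
    simp only [Finset.mem_filter, Finset.mem_Icc]
    omega
  rw [step1, Finset.sum_comm]
  apply Finset.sum_congr rfl
  intro n _
  push_cast
  rw [Finset.mul_sum]
  apply Finset.sum_congr rfl
  intro M _
  split <;> simp

private lemma norm_logAvgOn_le (S : Finset ℕ) (f : ℕ → ℂ) (hf : ∀ n ∈ S, ‖f n‖ ≤ 1) :
    ‖logAvgOn S f‖ ≤ 1 := by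
  have hd0 : (0:ℝ) ≤ ∑ n ∈ S, 1/(n:ℝ) := by positivity
  have hcast : (∑ n ∈ S, (1 / (n : ℂ))) = ((∑ n ∈ S, 1/(n:ℝ) : ℝ) : ℂ) := by push_cast; rfl
  have hnum : ‖∑ n ∈ S, f n / (n:ℂ)‖ ≤ ∑ n ∈ S, 1/(n:ℝ) := by
    refine le_trans (norm_sum_le _ _) (Finset.sum_le_sum ?_)
    intro n hn
    rw [norm_div, Complex.norm_natCast]
    rcases Nat.eq_zero_or_pos n with h | h
    · simp [h]
    · gcongr
      exact hf n hn
  rw [logAvgOn, hcast, norm_div, Complex.norm_real, Real.norm_of_nonneg hd0]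
  exact div_le_one_of_le₀ hnum hd0

private lemma norm_cesAvg_le (M : ℕ) (f : ℕ → ℂ) (hf : ∀ n, ‖f n‖ ≤ 1) :
    ‖cesAvg M f‖ ≤ 1 := by
  rw [cesAvg, norm_div, Complex.norm_natCast]
  apply div_le_one_of_le₀ _ (Nat.cast_nonneg M)
  calc ‖∑ n ∈ Finset.Icc 1 M, f n‖ ≤ ∑ n ∈ Finset.Icc 1 M, ‖f n‖ := norm_sum_le _ _
    _ ≤ ∑ n ∈ Finset.Icc 1 M, (1:ℝ) := Finset.sum_le_sum (fun n _ => hf n)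
    _ = M := by simp

set_option maxHeartbeats 2000000 in
theorem cesaro_to_log :
    ∃ C : ℝ, 0 < C ∧ ∀ f : ℕ → ℂ, (∀ n, ‖f n‖ ≤ 1) → ∀ N : ℕ, 2 ≤ N →
      ∀ ε : ℝ, 0 < ε → ε < 1 / 2 →
      ‖logAvg N f -
          logAvgOn ((Finset.Ioo 0 N).filter (fun M => (N : ℝ) ^ ε < (M : ℝ)))
            (fun M => cesAvg M f)‖
        ≤ C * (1 / Real.log N + ε) := by
  refine ⟨100, by norm_num, ?_⟩
  intro f hf N hN ε hε hε2
  have hN1R : (1:ℝ) < (N:ℝ) := by exact_mod_cast hN.trans_lt' one_lt_two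
  have hN0R : (0:ℝ) < (N:ℝ) := by linarith
  have hlN0 : 0 < Real.log N := Real.log_pos hN1R
  -- trivial bound by 2
  have htriv : ‖logAvg N f -
      logAvgOn ((Finset.Ioo 0 N).filter (fun M : ℕ => (N : ℝ) ^ ε < (M : ℝ)))
        (fun M => cesAvg M f)‖ ≤ 2 := by
    refine le_trans (norm_sub_le _ _) ?_
    have h1 : ‖logAvg N f‖ ≤ 1 := norm_logAvgOn_le _ f (fun n _ => hf n)
    have h2 : ‖logAvgOn ((Finset.Ioo 0 N).filter (fun M : ℕ => (N : ℝ) ^ ε < (M : ℝ)))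
        (fun M => cesAvg M f)‖ ≤ 1 :=
      norm_logAvgOn_le _ _ (fun M _ => norm_cesAvg_le M f hf)
    linarith
  by_cases hlNsmall : Real.log N ≤ 8
  · -- small N
    refine le_trans htriv ?_
    have h1 : (1:ℝ)/8 ≤ 1 / Real.log N := by gcongr
    have h2 : (100:ℝ) * (1/Real.log N + ε) = 100*(1/Real.log N) + 100*ε := by ring
    linarith
  push_neg at hlNsmall
  set lN := Real.log N with hlNdef
  clear_value lN
  have hlN : 8 < lN := hlNsmall
  -- the floor
  set K := Nat.floor ((N:ℝ)^ε) with hKdef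
  have hrpow_pos : (0:ℝ) < (N:ℝ)^ε := Real.rpow_pos_of_pos hN0R ε
  have hKle : (K:ℝ) ≤ (N:ℝ)^ε := Nat.floor_le hrpow_pos.le
  have hrpowN : (N:ℝ)^ε < (N:ℝ) := by
    calc (N:ℝ)^ε < (N:ℝ)^(1:ℝ) := Real.rpow_lt_rpow_of_exponent_lt hN1R (by linarith)
      _ = N := Real.rpow_one _
  have hKN : K < N := by
    have : (K:ℝ) < (N:ℝ) := lt_of_le_of_lt hKle hrpowN
    exact_mod_cast this
  -- identify the filtered set
  have hSeq : (Finset.Ioo 0 N).filter (fun M : ℕ => (N : ℝ) ^ ε < (M : ℝ)) = Finset.Ioo K N := by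
    refine Finset.ext fun M => ?_
    simp only [Finset.mem_filter, Finset.mem_Ioo]
    constructor
    · rintro ⟨⟨_, hMN⟩, hgt⟩
      exact ⟨(Nat.floor_lt hrpow_pos.le).mpr hgt, hMN⟩
    · rintro ⟨hKM, hMN⟩
      refine ⟨⟨by omega, hMN⟩, (Nat.floor_lt hrpow_pos.le).mp hKM⟩
  clear_value K
  -- real quantities
  set L : ℝ := ∑ n ∈ Finset.Icc 1 N, (1:ℝ)/(n:ℝ) with hLdef
  set D : ℝ := ∑ M ∈ Finset.Ioo K N, (1:ℝ)/(M:ℝ) with hDdef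
  set HK : ℝ := ∑ n ∈ Finset.Icc 1 K, (1:ℝ)/(n:ℝ) with hHKdef
  clear_value L D HK
  have harmval : ∀ m : ℕ, ((harmonic m : ℚ) : ℝ) = ∑ n ∈ Finset.Icc 1 m, (1:ℝ)/(n:ℝ) := by
    intro m
    rw [harmonic_eq_sum_Icc]
    push_cast
    simp [one_div]
  have hvN := harmval N
  rw [← hLdef] at hvN
  have hvK := harmval K
  rw [← hHKdef] at hvK
  have hLlow : lN ≤ L := by
    have h2 := log_add_one_le_harmonic N
    rw [hvN] at h2
    have h1 : Real.log (N:ℝ) ≤ Real.log ((N:ℝ)+1) := by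
      apply Real.log_le_log hN0R
      linarith
    push_cast at h2
    linarith
  have hLup : L ≤ 1 + lN := by
    have h2 := harmonic_le_one_add_log N
    rw [hvN, ← hlNdef] at h2
    exact h2
  have hHK : HK ≤ 1 + ε * lN := by
    rcases Nat.eq_zero_or_pos K with h | h
    · have hz : HK = 0 := by rw [hHKdef, h]; simp
      rw [hz]
      positivity
    · have h2 := harmonic_le_one_add_log K
      rw [hvK] at h2
      have h3 : Real.log K ≤ Real.log ((N:ℝ)^ε) := by
        apply Real.log_le_log _ hKle
        exact_mod_cast h
      rw [Real.log_rpow hN0R, ← hlNdef] at h3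
      linarith
  have hHK0 : 0 ≤ HK := by rw [hHKdef]; positivity
  have hD0' : 0 ≤ D := by rw [hDdef]; positivity
  -- L = HK + D + 1/N
  have hLD : L = HK + D + 1/(N:ℝ) := by
    have e1 : Finset.Icc 1 N = Finset.Ioc 0 N := Finset.Icc_add_one_left_eq_Ioc 0 N
    have e2 : Finset.Icc 1 K = Finset.Ioc 0 K := Finset.Icc_add_one_left_eq_Ioc 0 K
    have e3 : ∑ i ∈ Finset.Ioc 0 K, (1:ℝ)/(i:ℝ) + ∑ i ∈ Finset.Ioc K N, (1:ℝ)/(i:ℝ)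
        = ∑ i ∈ Finset.Ioc 0 N, (1:ℝ)/(i:ℝ) :=
      Finset.sum_Ioc_consecutive _ (Nat.zero_le K) hKN.le
    have e4 : ∑ M ∈ Finset.Ioc K N, (1:ℝ)/(M:ℝ) = D + 1/(N:ℝ) := by
      rw [hDdef, ← Finset.Ioo_insert_right hKN, Finset.sum_insert Finset.right_notMem_Ioo]
      ring
    rw [hLdef, hHKdef, e1, e2, ← e3, e4]
    ring
  have h1N : (1:ℝ)/(N:ℝ) ≤ 1 := by
    rw [div_le_one hN0R]; linarith
  have h1N0 : (0:ℝ) ≤ 1/(N:ℝ) := by positivity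
  have hεl : ε * lN ≤ lN/2 := by
    have h := mul_le_mul_of_nonneg_right hε2.le hlN0.le
    linarith
  have hDlow : lN/4 ≤ D := by linarith
  have hD0 : (0:ℝ) < D := by linarith
  have hL0 : (0:ℝ) < L := by linarith
  have hDL : D ≤ L := by linarith
  have hLD2 : L - D ≤ 2 + ε * lN := by linarith
  -- T function
  set T : ℕ → ℝ := fun n => ∑ M ∈ Finset.Ioo K N, if n ≤ M then (1:ℝ)/(M:ℝ)^2 else 0 with hTdef
  set A : ℂ := ∑ n ∈ Finset.Icc 1 N, f n / (n:ℂ) with hAdef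
  set B : ℂ := ∑ M ∈ Finset.Ioo K N, cesAvg M f / (M:ℂ) with hBdef
  clear_value T A B
  have hIooIcc : Finset.Ioo K N = Finset.Icc (K+1) (N-1) := by
    refine Finset.ext fun M => ?_
    simp only [Finset.mem_Ioo, Finset.mem_Icc]
    omega
  -- pointwise bounds on |1/n - T n|
  have hTbound1 : ∀ n ∈ Finset.Ioc 0 K, |1/(n:ℝ) - T n| ≤ 1/(n:ℝ) + 2/((K:ℝ)+1) := by
    intro n hn
    obtain ⟨hn0, hnK⟩ := Finset.mem_Ioc.mp hn
    have hTn : T n = ∑ M ∈ Finset.Icc (K+1) (N-1), (1:ℝ)/(M:ℝ)^2 := by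
      simp only [hTdef]
      rw [hIooIcc]
      apply Finset.sum_congr rfl
      intro M hM
      have hM' := (Finset.mem_Icc.mp hM).1
      rw [if_pos (by omega)]
    have hT0 : 0 ≤ T n := by
      rw [hTn]; positivity
    have hTup : T n ≤ 2/((K:ℝ)+1) := by
      rw [hTn]
      refine le_trans (sum_inv_sq_upper (K+1) (N-1) (by omega)) ?_
      have hK1' : (0:ℝ) < (K:ℝ)+1 := by positivity
      have hc : ((K+1:ℕ):ℝ) = (K:ℝ)+1 := by push_cast; ring
      rw [hc]
      have h : (1:ℝ)/((K:ℝ)+1)^2 ≤ 1/((K:ℝ)+1) := by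
        apply div_le_div_of_nonneg_left one_pos.le hK1'
        nlinarith
      have e2 : (2:ℝ)/((K:ℝ)+1) = 1/((K:ℝ)+1) + 1/((K:ℝ)+1) := by ring
      rw [e2]
      linarith
    have h1n : 0 < (1:ℝ)/(n:ℝ) := by
      have : (0:ℝ) < (n:ℝ) := by exact_mod_cast hn0
      positivity
    rw [abs_le]
    constructor <;> linarith
  have hTbound2 : ∀ n ∈ Finset.Ioc K N, |1/(n:ℝ) - T n| ≤ 1/(n:ℝ)^2 + 1/(N:ℝ) := by
    intro n hn
    obtain ⟨hnK, hnN⟩ := Finset.mem_Ioc.mp hn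
    have hn1 : 1 ≤ n := by omega
    have hTn : T n = ∑ M ∈ Finset.Icc n (N-1), (1:ℝ)/(M:ℝ)^2 := by
      simp only [hTdef]
      rw [← Finset.sum_filter]
      congr 1
      refine Finset.ext fun M => ?_
      simp only [Finset.mem_filter, Finset.mem_Ioo, Finset.mem_Icc]
      omega
    have hcast : ((N-1 : ℕ):ℝ) + 1 = (N:ℝ) := by
      push_cast [Nat.cast_sub (by omega : 1 ≤ N)]
      ring
    have hup : T n ≤ 1/(n:ℝ)^2 + 1/(n:ℝ) := by
      rw [hTn]; exact sum_inv_sq_upper n (N-1) hn1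
    have hlow : 1/(n:ℝ) - 1/(N:ℝ) ≤ T n := by
      rw [hTn]
      have h := sum_inv_sq_lower (N-1) n hn1 (by omega)
      rw [hcast] at h
      exact h
    have hsq0 : (0:ℝ) ≤ 1/(n:ℝ)^2 := by positivity
    rw [abs_le]
    constructor <;> linarith
  -- sum of squares bound
  have hsumsq : ∑ n ∈ Finset.Icc 1 N, (1:ℝ)/(n:ℝ)^2 ≤ 2 := by
    have e : Finset.Icc 1 N = insert 1 (Finset.Icc 2 N) := by
      refine Finset.ext fun n => ?_
      simp only [Finset.mem_insert, Finset.mem_Icc]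
      omega
    rw [e, Finset.sum_insert (by simp)]
    have h := sum_inv_sq_upper 2 N (by omega)
    norm_num at h ⊢
    linarith
  -- main estimate on ‖A - B‖
  have hAB : ‖A - B‖ ≤ 6 + ε * lN := by
    have hBT : B = ∑ n ∈ Finset.Icc 1 N, f n * ((T n : ℝ) : ℂ) := by
      rw [hBdef]
      simp only [hTdef]
      exact swap_sum f N K
    have hAT : A = ∑ n ∈ Finset.Icc 1 N, f n * (((1:ℝ)/(n:ℝ) : ℝ) : ℂ) := by
      rw [hAdef]
      apply Finset.sum_congr rfl
      intro n _
      push_cast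
      rw [mul_one_div]
    have hABsum : A - B = ∑ n ∈ Finset.Icc 1 N, f n * (((1:ℝ)/(n:ℝ) - T n : ℝ) : ℂ) := by
      rw [hAT, hBT, ← Finset.sum_sub_distrib]
      apply Finset.sum_congr rfl
      intro n _
      push_cast
      ring
    have hnorm : ‖A - B‖ ≤ ∑ n ∈ Finset.Icc 1 N, |1/(n:ℝ) - T n| := by
      rw [hABsum]
      refine le_trans (norm_sum_le _ _) (Finset.sum_le_sum ?_)
      intro n _
      rw [norm_mul, Complex.norm_real, Real.norm_eq_abs]
      calc ‖f n‖ * |1/(n:ℝ) - T n| ≤ 1 * |1/(n:ℝ) - T n| := by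
            apply mul_le_mul_of_nonneg_right (hf n) (abs_nonneg _)
        _ = |1/(n:ℝ) - T n| := one_mul _
    have hsplit : ∑ n ∈ Finset.Icc 1 N, |1/(n:ℝ) - T n|
        = ∑ n ∈ Finset.Ioc 0 K, |1/(n:ℝ) - T n| + ∑ n ∈ Finset.Ioc K N, |1/(n:ℝ) - T n| := by
      rw [show Finset.Icc 1 N = Finset.Ioc 0 N from Finset.Icc_add_one_left_eq_Ioc 0 N]
      exact (Finset.sum_Ioc_consecutive _ (Nat.zero_le K) hKN.le).symm
    have hpart1 : ∑ n ∈ Finset.Ioc 0 K, |1/(n:ℝ) - T n| ≤ HK + 2 := by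
      refine le_trans (Finset.sum_le_sum hTbound1) ?_
      rw [Finset.sum_add_distrib, Finset.sum_const, Nat.card_Ioc, Nat.sub_zero, nsmul_eq_mul]
      have hHKeq : ∑ n ∈ Finset.Ioc 0 K, (1:ℝ)/(n:ℝ) = HK := by
        rw [hHKdef, show Finset.Icc 1 K = Finset.Ioc 0 K from Finset.Icc_add_one_left_eq_Ioc 0 K]
      rw [hHKeq]
      have hK1' : (0:ℝ) < (K:ℝ)+1 := by positivity
      have hK2 : (K:ℝ) * (2/((K:ℝ)+1)) ≤ 2 := by
        rw [← mul_div_assoc, div_le_iff₀ hK1']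
        nlinarith
      linarith
    have hpart2 : ∑ n ∈ Finset.Ioc K N, |1/(n:ℝ) - T n| ≤ 3 := by
      refine le_trans (Finset.sum_le_sum hTbound2) ?_
      rw [Finset.sum_add_distrib, Finset.sum_const, Nat.card_Ioc, nsmul_eq_mul]
      have hsub : ∑ n ∈ Finset.Ioc K N, (1:ℝ)/(n:ℝ)^2 ≤ ∑ n ∈ Finset.Icc 1 N, (1:ℝ)/(n:ℝ)^2 := by
        apply Finset.sum_le_sum_of_subset_of_nonneg
        · intro n hn
          simp only [Finset.mem_Ioc] at hn
          simp only [Finset.mem_Icc]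
          omega
        · intro n _ _
          positivity
      have hcard : ((N - K : ℕ):ℝ) * (1/(N:ℝ)) ≤ 1 := by
        have h1 : ((N - K : ℕ):ℝ) ≤ (N:ℝ) := by
          exact_mod_cast Nat.sub_le N K
        have h2 : ((N - K : ℕ):ℝ) * (1/(N:ℝ)) ≤ (N:ℝ) * (1/(N:ℝ)) :=
          mul_le_mul_of_nonneg_right h1 h1N0
        rw [mul_one_div, mul_one_div, div_self (ne_of_gt hN0R)] at h2
        rw [mul_one_div]
        exact h2
      linarith
    rw [hsplit] at hnorm
    linarith
  -- norm of A
  have hAnorm : ‖A‖ ≤ L := by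
    rw [hAdef, hLdef]
    refine le_trans (norm_sum_le _ _) (Finset.sum_le_sum ?_)
    intro n hn
    rw [norm_div, Complex.norm_natCast]
    gcongr
    exact hf n
  -- rewrite the two averages
  have hLavg : logAvg N f = A / ((L:ℝ):ℂ) := by
    rw [logAvg, logAvgOn, ← hAdef]
    congr 1
    rw [hLdef]
    push_cast
    rfl
  have hRavg : logAvgOn ((Finset.Ioo 0 N).filter (fun M : ℕ => (N : ℝ) ^ ε < (M : ℝ)))
      (fun M => cesAvg M f) = B / ((D:ℝ):ℂ) := by
    rw [hSeq, logAvgOn, ← hBdef]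
    congr 1
    rw [hDdef]
    push_cast
    rfl
  have hLne : ((L:ℝ):ℂ) ≠ 0 := Complex.ofReal_ne_zero.mpr (ne_of_gt hL0)
  have hDne : ((D:ℝ):ℂ) ≠ 0 := Complex.ofReal_ne_zero.mpr (ne_of_gt hD0)
  have key : A / ((L:ℝ):ℂ) - B / ((D:ℝ):ℂ)
      = (A - B)/((D:ℝ):ℂ) + A * (((1/L - 1/D : ℝ)):ℂ) := by
    push_cast
    field_simp [hLne, hDne]
    ring
  have hnorm2 : ‖A / ((L:ℝ):ℂ) - B / ((D:ℝ):ℂ)‖ ≤ (6 + ε*lN)/D + (2 + ε*lN)/D := by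
    rw [key]
    refine le_trans (norm_add_le _ _) ?_
    have t1 : ‖(A - B)/((D:ℝ):ℂ)‖ ≤ (6 + ε*lN)/D := by
      rw [norm_div, Complex.norm_real, Real.norm_of_nonneg hD0.le]
      gcongr
    have t2 : ‖A * (((1/L - 1/D : ℝ)):ℂ)‖ ≤ (2 + ε*lN)/D := by
      rw [norm_mul, Complex.norm_real, Real.norm_eq_abs]
      have hinvle : 1/L ≤ 1/D := by gcongr
      have habs : |1/L - 1/D| = 1/D - 1/L := by
        rw [abs_of_nonpos (by linarith)]
        ring
      rw [habs]
      calc ‖A‖ * (1/D - 1/L) ≤ L * (1/D - 1/L) :=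
            mul_le_mul_of_nonneg_right hAnorm (by linarith)
        _ = (L - D)/D := by
            rw [mul_sub, mul_one_div, mul_one_div, div_self (ne_of_gt hL0), sub_div,
              div_self (ne_of_gt hD0)]
        _ ≤ (2 + ε*lN)/D := by gcongr
    linarith
  rw [hLavg, hRavg]
  have hlN4 : (0:ℝ) < lN/4 := by linarith
  have h8 : (0:ℝ) ≤ 8 + 2*(ε*lN) := by
    have := mul_pos hε hlN0
    linarith
  have hmono : (8 + 2*(ε*lN))/D ≤ (8 + 2*(ε*lN))/(lN/4) :=
    div_le_div_of_nonneg_left h8 hlN4 hDlow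
  have heval : (8 + 2*(ε*lN))/(lN/4) = 32/lN + 8*ε := by
    field_simp [ne_of_gt hlN0]
    ring
  have hfin : 32/lN + 8*ε ≤ 100 * (1/lN + ε) := by
    have h1 : 32/lN ≤ 100/lN := by gcongr <;> norm_num
    have h2 : 100 * (1/lN + ε) = 100/lN + 100*ε := by ring
    linarith
  calc ‖A / ((L:ℝ):ℂ) - B / ((D:ℝ):ℂ)‖ ≤ (6 + ε*lN)/D + (2 + ε*lN)/D := hnorm2
    _ = (8 + 2*(ε*lN))/D := by rw [← add_div]; ring_nf
    _ ≤ (8 + 2*(ε*lN))/(lN/4) := hmono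
    _ = 32/lN + 8*ε := heval
    _ ≤ 100 * (1/lN + ε) := hfin
end

section
/- Let k, ℓ, r, s ∈ ℕ with gcd(r, s) = 1. Suppose f : ℕ → ℂ is r-periodic and can be written as f(n) = ∑_{i=1}^{k} v_i · 1_{n ≡ b_i (mod a_i)} with |v_i| ≤ 1 and a_i | r, and g : ℕ → ℂ is s-periodic and can be written as g(n) = ∑_{j=1}^{ℓ} w_j · 1_{n ≡ d_j (mod c_j)} with |w_j| ≤ 1 and c_j | s. Then for any N ∈ ℕ, (1/N)∑_{n=1}^{N} f(n)g(n) = ((1/N)∑_{n=1}^{N} f(n))·((1/N)∑_{n=1}^{N} g(n)) + O(kℓ/N), where the implied constant is absolute. -/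
lemma cnt_boundQ (r v N : ℕ) (hr : 0 < r) :
    |((((Finset.Icc 1 N).filter (fun n => n % r = v % r)).card : ℚ)) - N / r| ≤ 1 := by
  have hIcc : Finset.Icc 1 N = Finset.Ioc 0 N := by ext x; simp [Finset.mem_Icc, Finset.mem_Ioc]; omega
  rw [hIcc]
  show |((((Finset.Ioc 0 N).filter (· ≡ v [MOD r])).card : ℚ)) - N / r| ≤ 1
  have hcard := Nat.Ioc_filter_modEq_card 0 N hr v
  push_cast at hcard
  set x : ℚ := ((N : ℚ) - v) / r with hx
  set y : ℚ := ((0 : ℚ) - v) / r with hy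
  have h1 : (⌊x⌋ : ℚ) ≤ x := Int.floor_le x
  have h2 : x - 1 < ⌊x⌋ := Int.sub_one_lt_floor x
  have h3 : (⌊y⌋ : ℚ) ≤ y := Int.floor_le y
  have h4 : y - 1 < ⌊y⌋ := Int.sub_one_lt_floor y
  have hNr : (0:ℚ) ≤ (N:ℚ)/r := by positivity
  have hr' : (0:ℚ) < r := by exact_mod_cast hr
  have hxy : x - y = N / r := by rw [hx, hy]; field_simp; ring
  have hge : (0:ℤ) ≤ ⌊x⌋ - ⌊y⌋ := by
    by_contra h
    push_neg at h
    have : (⌊x⌋ : ℚ) - ⌊y⌋ ≤ -1 := by exact_mod_cast Int.le_sub_one_of_lt h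
    linarith
  have hc2 : (((Finset.Ioc 0 N).filter (· ≡ v [MOD r])).card : ℚ)
      = ((⌊x⌋ - ⌊y⌋ : ℤ) : ℚ) := by
    rw [max_eq_left hge] at hcard
    exact_mod_cast hcard
  rw [hc2]
  push_cast
  rw [abs_le]
  constructor <;> linarith

lemma cnt_bound (r v N : ℕ) (hr : 0 < r) :
    |((((Finset.Icc 1 N).filter (fun n => n % r = v % r)).card : ℝ)) - N / r| ≤ 1 := by
  have h := cnt_boundQ r v N hr
  have h2 : |((((((Finset.Icc 1 N).filter (fun n => n % r = v % r)).card : ℚ)) - N / r : ℚ) : ℝ)| ≤ 1 := by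
    rw [← Rat.cast_abs]
    exact_mod_cast h
  push_cast at h2
  exact h2

lemma tri4 (A B C D : ℝ) : |A - B - C - D| ≤ |A| + |B| + |C| + |D| := by
  have h1 : |A - B - C - D| ≤ |A - B - C| + |D| := by
    rw [sub_eq_add_neg (A - B - C)]
    exact (abs_add_le _ _).trans (by rw [abs_neg])
  have h2 : |A - B - C| ≤ |A - B| + |C| := by
    rw [sub_eq_add_neg (A - B)]
    exact (abs_add_le _ _).trans (by rw [abs_neg])
  have h3 : |A - B| ≤ |A| + |B| := abs_sub A B
  linarith

lemma aux_real (a c N P Q R : ℝ) (ha : 1 ≤ a) (hc : 1 ≤ c) (hN : 1 ≤ N)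
    (hP : |P - N/a| ≤ 1) (hQ : |Q - N/c| ≤ 1) (hR : |R - N/(a*c)| ≤ 1) :
    |R/N - P/N*(Q/N)| ≤ 4/N := by
  have ha0 : (0:ℝ) < a := by linarith
  have hc0 : (0:ℝ) < c := by linarith
  have hN0 : (0:ℝ) < N := by linarith
  have key : R/N - P/N*(Q/N) = (R - N/(a*c))/N - (P - N/a)*(Q - N/c)/N^2
      - (P - N/a)/(c*N) - (Q - N/c)/(a*N) := by
    field_simp
    ring
  rw [key]
  have t := tri4 ((R - N/(a*c))/N) ((P - N/a)*(Q - N/c)/N^2) ((P - N/a)/(c*N)) ((Q - N/c)/(a*N))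
  have b1 : |(R - N/(a*c))/N| ≤ 1/N := by
    rw [abs_div, abs_of_pos hN0, div_le_div_iff₀ hN0 hN0]
    nlinarith
  have b2 : |(P - N/a)*(Q - N/c)/N^2| ≤ 1/N := by
    rw [abs_div, abs_of_pos (by positivity : (0:ℝ) < N^2), div_le_div_iff₀ (by positivity) hN0,
      abs_mul]
    have h12 : |P - N/a| * |Q - N/c| ≤ 1 := mul_le_one₀ hP (abs_nonneg _) hQ
    nlinarith [h12]
  have b3 : |(P - N/a)/(c*N)| ≤ 1/N := by
    rw [abs_div, abs_of_pos (by positivity : (0:ℝ) < c*N), div_le_div_iff₀ (by positivity) hN0]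
    nlinarith [abs_nonneg (P - N/a)]
  have b4 : |(Q - N/c)/(a*N)| ≤ 1/N := by
    rw [abs_div, abs_of_pos (by positivity : (0:ℝ) < a*N), div_le_div_iff₀ (by positivity) hN0]
    nlinarith [abs_nonneg (Q - N/c)]
  calc |_ - _ - _ - _| ≤ _ := t
    _ ≤ 4/N := by rw [show (4:ℝ)/N = 1/N+1/N+1/N+1/N by ring]; linarith

theorem independence_of_periodic_functions :
    ∃ C : ℝ, 0 < C ∧
      ∀ (k ℓ r s : ℕ), 0 < r → 0 < s → Nat.Coprime r s →
      ∀ (f g : ℕ → ℂ) (v : Fin k → ℂ) (a b : Fin k → ℕ) (w : Fin ℓ → ℂ) (c d : Fin ℓ → ℕ),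
        (∀ n, f (n + r) = f n) →
        (∀ i, ‖v i‖ ≤ 1) → (∀ i, a i ∣ r) →
        (∀ n, f n = ∑ i, v i * (if n % a i = b i % a i then (1 : ℂ) else 0)) →
        (∀ n, g (n + s) = g n) →
        (∀ j, ‖w j‖ ≤ 1) → (∀ j, c j ∣ s) →
        (∀ n, g n = ∑ j, w j * (if n % c j = d j % c j then (1 : ℂ) else 0)) →
        ∀ N : ℕ, 0 < N →
        ‖(1 / (N : ℂ)) * ∑ n ∈ Finset.Icc 1 N, f n * g n
            - ((1 / (N : ℂ)) * ∑ n ∈ Finset.Icc 1 N, f n)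
              * ((1 / (N : ℂ)) * ∑ n ∈ Finset.Icc 1 N, g n)‖
          ≤ C * k * ℓ / N := by
  refine ⟨4, by norm_num, ?_⟩
  intro k ℓ r s hr hs hrs f g v a b w c d hfper hv ha hf hgper hw hc hg N hN
  have haN : ∀ i, 0 < a i := fun i => Nat.pos_of_dvd_of_pos (ha i) hr
  have hcN : ∀ j, 0 < c j := fun j => Nat.pos_of_dvd_of_pos (hc j) hs
  -- counts
  set cntA : Fin k → ℕ := fun i => ((Finset.Icc 1 N).filter (fun n => n % a i = b i % a i)).card with hcntA
  set cntC : Fin ℓ → ℕ := fun j => ((Finset.Icc 1 N).filter (fun n => n % c j = d j % c j)).card with hcntC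
  set cnt2 : Fin k → Fin ℓ → ℕ := fun i j =>
    ((Finset.Icc 1 N).filter (fun n => n % a i = b i % a i ∧ n % c j = d j % c j)).card with hcnt2
  -- sums as counts
  have hSf : ∑ n ∈ Finset.Icc 1 N, f n = ∑ i, v i * (cntA i : ℂ) := by
    simp only [hf]
    rw [Finset.sum_comm]
    refine Finset.sum_congr rfl fun i _ => ?_
    rw [← Finset.mul_sum, Finset.sum_boole]
  have hSg : ∑ n ∈ Finset.Icc 1 N, g n = ∑ j, w j * (cntC j : ℂ) := by
    simp only [hg]
    rw [Finset.sum_comm]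
    refine Finset.sum_congr rfl fun j _ => ?_
    rw [← Finset.mul_sum, Finset.sum_boole]
  have hSfg : ∑ n ∈ Finset.Icc 1 N, f n * g n
      = ∑ i, ∑ j, v i * w j * (cnt2 i j : ℂ) := by
    have hterm : ∀ n, f n * g n = ∑ i, ∑ j, v i * w j *
        (if (n % a i = b i % a i ∧ n % c j = d j % c j) then (1:ℂ) else 0) := by
      intro n
      rw [hf n, hg n, Finset.sum_mul_sum]
      refine Finset.sum_congr rfl fun i _ => Finset.sum_congr rfl fun j _ => ?_
      by_cases h1 : n % a i = b i % a i <;> by_cases h2 : n % c j = d j % c j <;>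
        simp [h1, h2]
    simp only [hterm]
    rw [Finset.sum_comm]
    refine Finset.sum_congr rfl fun i _ => ?_
    rw [Finset.sum_comm]
    refine Finset.sum_congr rfl fun j _ => ?_
    rw [← Finset.mul_sum, Finset.sum_boole]
  -- rewrite the difference as a double sum
  have key : (1 / (N : ℂ)) * ∑ n ∈ Finset.Icc 1 N, f n * g n
      - ((1 / (N : ℂ)) * ∑ n ∈ Finset.Icc 1 N, f n)
        * ((1 / (N : ℂ)) * ∑ n ∈ Finset.Icc 1 N, g n)
      = ∑ i, ∑ j, v i * w j *
          ((cnt2 i j : ℂ)/N - ((cntA i : ℂ)/N) * ((cntC j : ℂ)/N)) := by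
    rw [hSf, hSg, hSfg, Finset.mul_sum, Finset.mul_sum, Finset.mul_sum, Finset.sum_mul_sum,
      ← Finset.sum_sub_distrib]
    refine Finset.sum_congr rfl fun i _ => ?_
    rw [Finset.mul_sum, ← Finset.sum_sub_distrib]
    refine Finset.sum_congr rfl fun j _ => ?_
    ring
  rw [key]
  -- per-term bound
  have hterm_bound : ∀ i j, ‖v i * w j *
      ((cnt2 i j : ℂ)/N - ((cntA i : ℂ)/N) * ((cntC j : ℂ)/N))‖ ≤ 4 / N := by
    intro i j
    have hcop : Nat.Coprime (a i) (c j) :=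
      Nat.Coprime.coprime_dvd_right (hc j) (Nat.Coprime.coprime_dvd_left (ha i) hrs)
    obtain ⟨e, he1, he2⟩ := Nat.chineseRemainder hcop (b i) (d j)
    have hfilter : cnt2 i j
        = ((Finset.Icc 1 N).filter (fun n => n % (a i * c j) = e % (a i * c j))).card := by
      have hset : (Finset.Icc 1 N).filter (fun n => n % a i = b i % a i ∧ n % c j = d j % c j)
          = (Finset.Icc 1 N).filter (fun n => n % (a i * c j) = e % (a i * c j)) := by
        apply Finset.filter_congr
        intro n _
        have h1 : (n % a i = b i % a i ∧ n % c j = d j % c j)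
            ↔ (n ≡ e [MOD a i] ∧ n ≡ e [MOD c j]) := by
          unfold Nat.ModEq
          rw [he1, he2]
        rw [h1, Nat.modEq_and_modEq_iff_modEq_mul hcop]
        rfl
      simp only [hcnt2, hset]
    -- real bounds
    have hA := cnt_bound (a i) (b i) N (haN i)
    have hC := cnt_bound (c j) (d j) N (hcN j)
    have h2 := cnt_bound (a i * c j) e N (Nat.mul_pos (haN i) (hcN j))
    rw [← hfilter] at h2
    push_cast at h2
    have hEa : (1:ℝ) ≤ (a i : ℝ) := by exact_mod_cast haN i
    have hEc : (1:ℝ) ≤ (c j : ℝ) := by exact_mod_cast hcN j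
    have hEN : (1:ℝ) ≤ (N : ℝ) := by exact_mod_cast hN
    have hmain := aux_real (a i) (c j) N (cntA i) (cntC j) (cnt2 i j) hEa hEc hEN hA hC h2
    have hnorm : ‖((cnt2 i j : ℂ)/N - ((cntA i : ℂ)/N) * ((cntC j : ℂ)/N))‖
        = |((cnt2 i j : ℝ)/N - ((cntA i : ℝ)/N) * ((cntC j : ℝ)/N))| := by
      rw [show ((cnt2 i j : ℂ)/N - ((cntA i : ℂ)/N) * ((cntC j : ℂ)/N))
          = (((cnt2 i j : ℝ)/N - ((cntA i : ℝ)/N) * ((cntC j : ℝ)/N) : ℝ) : ℂ) by push_cast; ring]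
      rw [Complex.norm_real, Real.norm_eq_abs]
    calc ‖v i * w j * ((cnt2 i j : ℂ)/N - ((cntA i : ℂ)/N) * ((cntC j : ℂ)/N))‖
        = ‖v i‖ * ‖w j‖ * ‖((cnt2 i j : ℂ)/N - ((cntA i : ℂ)/N) * ((cntC j : ℂ)/N))‖ := by
          rw [norm_mul, norm_mul]
      _ ≤ 1 * 1 * (4/N) := by
          refine mul_le_mul (mul_le_mul (hv i) (hw j) (norm_nonneg _) (by norm_num)) ?_
            (norm_nonneg _) (by norm_num)
          rw [hnorm]; exact hmain
      _ = 4/N := by ring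
  calc ‖∑ i, ∑ j, v i * w j * ((cnt2 i j : ℂ)/N - ((cntA i : ℂ)/N) * ((cntC j : ℂ)/N))‖
      ≤ ∑ i, ∑ j, ‖v i * w j * ((cnt2 i j : ℂ)/N - ((cntA i : ℂ)/N) * ((cntC j : ℂ)/N))‖ := by
        refine (norm_sum_le _ _).trans ?_
        exact Finset.sum_le_sum fun i _ => norm_sum_le _ _
    _ ≤ ∑ _i : Fin k, ∑ _j : Fin ℓ, 4 / (N:ℝ) :=
        Finset.sum_le_sum fun i _ => Finset.sum_le_sum fun j _ => hterm_bound i j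
    _ = 4 * k * ℓ / N := by
        simp [Finset.sum_const, Finset.card_univ]
        ring
end

section
/- Let N ∈ ℕ and let P be a set of primes contained in [1, N]. Define for n ≤ N the quantity ω_P(n) = ∑_{p ∈ P} 1_{p | n} and L = ∑_{p ∈ P} 1/p. Then (1/N) ∑_{n=1}^{N} |ω_P(n) − L| ≤ 2 √L. -/
open Finset

private lemma tk_count (N d : ℕ) :
    (∑ n ∈ Finset.Icc 1 N, (if d ∣ n then (1:ℝ) else 0)) = ((N / d : ℕ) : ℝ) := by
  rw [Finset.sum_boole]
  rw [show Finset.Icc 1 N = Finset.Ioc 0 N from Finset.Icc_add_one_left_eq_Ioc 0 N,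
    Nat.Ioc_filter_dvd_card_eq_div]

private lemma tk_lower (N d : ℕ) (hd : 0 < d) :
    (N : ℝ) / d - 1 ≤ ((N / d : ℕ) : ℝ) := by
  have h : N < d * (N / d) + d := by
    have h1 := Nat.div_add_mod N d
    have h2 := Nat.mod_lt N hd
    omega
  have hd' : (0:ℝ) < d := by exact_mod_cast hd
  rw [sub_le_iff_le_add, div_le_iff₀ hd']
  have : (N : ℝ) < d * (N / d : ℕ) + d := by exact_mod_cast h
  nlinarith

theorem turan_kubilius_first_moment (N : ℕ) (hN : 0 < N) (P : Finset ℕ)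
    (hP : ∀ p ∈ P, p.Prime ∧ p ≤ N) :
    (1 / (N : ℝ)) * ∑ n ∈ Finset.Icc 1 N,
        |(∑ p ∈ P, (if p ∣ n then (1 : ℝ) else 0)) - ∑ p ∈ P, (1 / (p : ℝ))|
      ≤ 2 * Real.sqrt (∑ p ∈ P, (1 / (p : ℝ))) := by
  set L : ℝ := ∑ p ∈ P, (1 / (p : ℝ)) with hLdef
  have hL0 : 0 ≤ L := Finset.sum_nonneg fun p _ => by positivity
  set F : ℕ → ℝ := fun n => ∑ p ∈ P, (if p ∣ n then (1 : ℝ) else 0) with hFdef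
  have hNpos : (0:ℝ) < N := by exact_mod_cast hN
  -- card of P
  have hPcard : (P.card : ℝ) ≤ N := by
    have : P ⊆ Finset.Icc 1 N := by
      intro p hp
      obtain ⟨hprime, hle⟩ := hP p hp
      exact Finset.mem_Icc.mpr ⟨hprime.one_lt.le, hle⟩
    have := Finset.card_le_card this
    rw [Nat.card_Icc] at this
    exact_mod_cast this.trans (by omega)
  -- first moment
  have hS1 : (N : ℝ) * L - P.card ≤ ∑ n ∈ Finset.Icc 1 N, F n := by
    have : ∑ n ∈ Finset.Icc 1 N, F n = ∑ p ∈ P, ((N / p : ℕ) : ℝ) := by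
      rw [Finset.sum_comm]
      exact Finset.sum_congr rfl fun p _ => tk_count N p
    rw [this, hLdef, Finset.mul_sum,
      show (P.card : ℝ) = ∑ _p ∈ P, (1:ℝ) by simp, ← Finset.sum_sub_distrib]
    apply Finset.sum_le_sum
    intro p hp
    have hppos := (hP p hp).1.pos
    have := tk_lower N p hppos
    rw [mul_one_div]
    linarith
  -- second moment of F
  have hS2 : ∑ n ∈ Finset.Icc 1 N, (F n)^2 ≤ (N : ℝ) * L * L + (N : ℝ) * L := by
    have key : ∑ n ∈ Finset.Icc 1 N, (F n)^2
        = ∑ p ∈ P, ∑ q ∈ P, ∑ n ∈ Finset.Icc 1 N,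
            (if p ∣ n then (1:ℝ) else 0) * (if q ∣ n then (1:ℝ) else 0) := by
      simp only [hFdef, sq, Finset.sum_mul_sum]
      rw [Finset.sum_comm]
      refine Finset.sum_congr rfl fun p _ => ?_
      rw [Finset.sum_comm]
    rw [key]
    have step : ∀ p ∈ P, ∀ q ∈ P,
        (∑ n ∈ Finset.Icc 1 N,
          (if p ∣ n then (1:ℝ) else 0) * (if q ∣ n then (1:ℝ) else 0))
        ≤ (N : ℝ) / (p * q) + (if p = q then (N : ℝ) / p else 0) := by
      intro p hp q hq
      have hpp := (hP p hp).1
      have hqp := (hP q hq).1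
      have hppos : (0:ℝ) < p := by exact_mod_cast hpp.pos
      have hqpos : (0:ℝ) < q := by exact_mod_cast hqp.pos
      by_cases hpq : p = q
      · subst hpq
        simp only [eq_self_iff_true, if_true]
        have : ∑ n ∈ Finset.Icc 1 N,
            (if p ∣ n then (1:ℝ) else 0) * (if p ∣ n then (1:ℝ) else 0)
            = ∑ n ∈ Finset.Icc 1 N, (if p ∣ n then (1:ℝ) else 0) := by
          refine Finset.sum_congr rfl fun n _ => ?_
          by_cases h : p ∣ n <;> simp [h]
        rw [this, tk_count N p]
        have h1 : ((N / p : ℕ) : ℝ) ≤ (N : ℝ) / p := Nat.cast_div_le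
        have h2 : (0:ℝ) ≤ (N : ℝ) / (p * p) := by positivity
        linarith
      · simp only [if_neg hpq, add_zero]
        have hco : Nat.Coprime p q := (Nat.coprime_primes hpp hqp).mpr hpq
        have : ∑ n ∈ Finset.Icc 1 N,
            (if p ∣ n then (1:ℝ) else 0) * (if q ∣ n then (1:ℝ) else 0)
            = ∑ n ∈ Finset.Icc 1 N, (if p * q ∣ n then (1:ℝ) else 0) := by
          refine Finset.sum_congr rfl fun n _ => ?_
          by_cases h : p * q ∣ n
          · have h1 : p ∣ n := dvd_trans (Dvd.intro q rfl) h
            have h2 : q ∣ n := dvd_trans (Dvd.intro_left p rfl) h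
            simp [h, h1, h2]
          · have : ¬ (p ∣ n ∧ q ∣ n) := fun ⟨h1, h2⟩ => h (hco.mul_dvd_of_dvd_of_dvd h1 h2)
            by_cases h1 : p ∣ n <;> by_cases h2 : q ∣ n <;> simp [h, h1, h2] at this ⊢
          
        rw [this, tk_count N (p * q)]
        calc ((N / (p * q) : ℕ) : ℝ) ≤ (N : ℝ) / ((p * q : ℕ) : ℝ) := Nat.cast_div_le
          _ = (N : ℝ) / (p * q) := by push_cast; ring
    calc ∑ p ∈ P, ∑ q ∈ P, ∑ n ∈ Finset.Icc 1 N,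
            (if p ∣ n then (1:ℝ) else 0) * (if q ∣ n then (1:ℝ) else 0)
        ≤ ∑ p ∈ P, ∑ q ∈ P, ((N : ℝ) / (p * q) + (if p = q then (N : ℝ) / p else 0)) := by
          exact Finset.sum_le_sum fun p hp => Finset.sum_le_sum fun q hq => step p hp q hq
      _ = (N : ℝ) * L * L + (N : ℝ) * L := by
          simp only [Finset.sum_add_distrib]
          congr 1
          · rw [hLdef, mul_assoc, Finset.sum_mul_sum, Finset.mul_sum]
            refine Finset.sum_congr rfl fun p _ => ?_
            rw [Finset.mul_sum]
            refine Finset.sum_congr rfl fun q _ => ?_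
            rw [div_eq_mul_inv, mul_inv, one_div, one_div]
          · rw [Finset.sum_congr rfl (fun p (hp : p ∈ P) => Finset.sum_ite_eq P p _),
              hLdef, Finset.mul_sum]
            refine Finset.sum_congr rfl fun p hp => ?_
            rw [if_pos hp, mul_one_div]
  -- second moment of F - L
  have hvar : ∑ n ∈ Finset.Icc 1 N, (F n - L)^2 ≤ 4 * (N : ℝ) * L := by
    have expand : ∑ n ∈ Finset.Icc 1 N, (F n - L)^2
        = ∑ n ∈ Finset.Icc 1 N, (F n)^2 - 2 * L * ∑ n ∈ Finset.Icc 1 N, F n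
          + (N : ℝ) * L^2 := by
      have hcard : ((Finset.Icc 1 N).card : ℝ) = N := by
        rw [Nat.card_Icc, Nat.add_sub_cancel]
      have hpt : ∀ n, (F n - L)^2 = (F n)^2 - 2 * L * F n + L^2 := fun n => by ring
      simp only [hpt]
      rw [Finset.sum_add_distrib, Finset.sum_sub_distrib, Finset.sum_const, nsmul_eq_mul,
        hcard, ← Finset.mul_sum]
    rw [expand]
    nlinarith [hS1, hS2, mul_nonneg hL0 (sub_nonneg.mpr hPcard)]
  -- Cauchy–Schwarz
  have hCS : (∑ n ∈ Finset.Icc 1 N, |F n - L|)^2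
      ≤ (N : ℝ) * ∑ n ∈ Finset.Icc 1 N, (F n - L)^2 := by
    have := Finset.sum_mul_sq_le_sq_mul_sq (Finset.Icc 1 N) (fun n => |F n - L|) (fun _ => 1)
    simp only [mul_one, one_pow, Finset.sum_const, nsmul_eq_mul, sq_abs] at this
    have hcard : ((Finset.Icc 1 N).card : ℝ) = N := by
      rw [Nat.card_Icc, Nat.add_sub_cancel]
    rw [hcard] at this
    calc (∑ n ∈ Finset.Icc 1 N, |F n - L|)^2
        ≤ (∑ n ∈ Finset.Icc 1 N, (F n - L)^2) * ((N:ℝ)) := this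
      _ = (N : ℝ) * ∑ n ∈ Finset.Icc 1 N, (F n - L)^2 := mul_comm _ _
  -- finish
  have habs : (0:ℝ) ≤ ∑ n ∈ Finset.Icc 1 N, |F n - L| :=
    Finset.sum_nonneg fun n _ => abs_nonneg _
  have hfinal : ∑ n ∈ Finset.Icc 1 N, |F n - L| ≤ 2 * (N : ℝ) * Real.sqrt L := by
    have h1 : (∑ n ∈ Finset.Icc 1 N, |F n - L|)^2 ≤ (2 * (N:ℝ) * Real.sqrt L)^2 := by
      have : (2 * (N:ℝ) * Real.sqrt L)^2 = 4 * (N:ℝ)^2 * L := by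
        rw [mul_pow, mul_pow, Real.sq_sqrt hL0]; ring
      rw [this]
      calc (∑ n ∈ Finset.Icc 1 N, |F n - L|)^2
          ≤ (N : ℝ) * ∑ n ∈ Finset.Icc 1 N, (F n - L)^2 := hCS
        _ ≤ (N : ℝ) * (4 * (N : ℝ) * L) := by
            exact mul_le_mul_of_nonneg_left hvar hNpos.le
        _ = 4 * (N:ℝ)^2 * L := by ring
    have h2 : (0:ℝ) ≤ 2 * (N : ℝ) * Real.sqrt L := by positivity
    have := Real.sqrt_le_sqrt h1
    rwa [Real.sqrt_sq habs, Real.sqrt_sq h2] at this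
  rw [one_div, inv_mul_le_iff₀ hNpos]
  calc ∑ n ∈ Finset.Icc 1 N, |F n - L| ≤ 2 * (N : ℝ) * Real.sqrt L := hfinal
    _ = (N : ℝ) * (2 * Real.sqrt L) := by ring
end
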